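/- Let X_1, …, X_n be a martingale difference sequence with respect to a filtration F = (F_i)_{0 ≤ i ≤ n}, with |X_i| ≤ K almost surely for all i. Let S_i = X_1 + ⋯ + X_i and let Σ_n² = Σ_{t=1}^n E[X_t² | F_{t−1}] be the sum of conditional variances. Then for all constants s > 0 and ν > 0, P( max_{i=1,…,n} S_i > s and Σ_n² ≤ ν ) ≤ exp( − s² / (2(ν + K s / 3)) ). -/

import Mathlib

open MeasureTheory Finset

section RealLemmas

private lemma bm_psi_nonneg : ∀ x : ℝ, 0 ≤ x → 0 ≤ (x - 1) * Real.exp x + 1 := by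
  have hd : ∀ x : ℝ, HasDerivAt (fun y : ℝ => (y - 1) * Real.exp y + 1)
      (x * Real.exp x) x := by
    intro x
    have h := (((hasDerivAt_id x).sub_const 1).mul (Real.hasDerivAt_exp x)).add_const 1
    simp only [id_eq] at h
    exact h.congr_deriv (by ring)
  intro x hx
  have hm : MonotoneOn (fun y : ℝ => (y - 1) * Real.exp y + 1) (Set.Ici 0) := by
    refine monotoneOn_of_deriv_nonneg (convex_Ici 0)
      (Continuous.continuousOn (by continuity)) ?_ ?_
    · intro y hy; exact (hd y).differentiableAt.differentiableWithinAt
    · intro y hy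
      rw [interior_Ici] at hy
      rw [(hd y).deriv]
      exact mul_nonneg (le_of_lt hy) (Real.exp_pos y).le
  have := hm (Set.self_mem_Ici) hx hx
  simpa using this

private lemma bm_phi'_nonneg : ∀ x : ℝ, 0 ≤ x → 0 ≤ Real.exp x * (x/3 - 2/3) + x/3 + 2/3 := by
  have hd : ∀ x : ℝ, HasDerivAt (fun y : ℝ => Real.exp y * (y/3 - 2/3) + y/3 + 2/3)
      (((x - 1) * Real.exp x + 1)/3) x := by
    intro x
    have h := (((Real.hasDerivAt_exp x).mul (((hasDerivAt_id x).div_const 3).sub_const (2/3))).add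
      ((hasDerivAt_id x).div_const 3)).add_const (2/3)
    simp only [id_eq] at h
    exact h.congr_deriv (by ring)
  intro x hx
  have hm : MonotoneOn (fun y : ℝ => Real.exp y * (y/3 - 2/3) + y/3 + 2/3) (Set.Ici 0) := by
    refine monotoneOn_of_deriv_nonneg (convex_Ici 0)
      (Continuous.continuousOn (by continuity)) ?_ ?_
    · intro y hy; exact (hd y).differentiableAt.differentiableWithinAt
    · intro y hy
      rw [interior_Ici] at hy
      rw [(hd y).deriv]
      have := bm_psi_nonneg y hy.le
      linarith
  have := hm (Set.self_mem_Ici) hx hx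
  simp only [Real.exp_zero] at this
  linarith [this]

private lemma bm_phi_nonneg : ∀ x : ℝ, 0 ≤ x → (Real.exp x - 1 - x) * (1 - x/3) ≤ x^2/2 := by
  have hd : ∀ x : ℝ, HasDerivAt (fun y : ℝ => y^2/2 - (Real.exp y - 1 - y) * (1 - y/3))
      (Real.exp x * (x/3 - 2/3) + x/3 + 2/3) x := by
    intro x
    have h := (((hasDerivAt_pow 2 x).div_const 2).sub
      ((((Real.hasDerivAt_exp x).sub_const 1).sub (hasDerivAt_id x)).mul
        ((hasDerivAt_const x 1).sub ((hasDerivAt_id x).div_const 3))))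
    simp only [id_eq] at h
    exact h.congr_deriv (by simp only [Pi.sub_apply, id_eq]; ring)
  intro x hx
  have hm : MonotoneOn (fun y : ℝ => y^2/2 - (Real.exp y - 1 - y) * (1 - y/3)) (Set.Ici 0) := by
    refine monotoneOn_of_deriv_nonneg (convex_Ici 0)
      (Continuous.continuousOn (by continuity)) ?_ ?_
    · intro y hy; exact (hd y).differentiableAt.differentiableWithinAt
    · intro y hy
      rw [interior_Ici] at hy
      rw [(hd y).deriv]
      exact bm_phi'_nonneg y hy.le
  have := hm (Set.self_mem_Ici) hx hx
  simp only [Real.exp_zero] at this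
  nlinarith [this]

private lemma bm_exp_le_neg : ∀ x : ℝ, x ≤ 0 → Real.exp x ≤ 1 + x + x^2/2 := by
  have hd : ∀ x : ℝ, HasDerivAt (fun y : ℝ => 1 + y + y^2/2 - Real.exp y)
      (1 + x - Real.exp x) x := by
    intro x
    have h := (((hasDerivAt_const x (1:ℝ)).add (hasDerivAt_id x)).add
      ((hasDerivAt_pow 2 x).div_const 2)).sub (Real.hasDerivAt_exp x)
    exact h.congr_deriv (by ring)
  intro x hx
  have hm : AntitoneOn (fun y : ℝ => 1 + y + y^2/2 - Real.exp y) (Set.Iic 0) := by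
    refine antitoneOn_of_deriv_nonpos (convex_Iic 0)
      (Continuous.continuousOn (by continuity)) ?_ ?_
    · intro y hy; exact (hd y).differentiableAt.differentiableWithinAt
    · intro y hy
      rw [interior_Iic] at hy
      rw [(hd y).deriv]
      have := Real.add_one_le_exp y
      linarith
  have := hm hx (Set.self_mem_Iic) hx
  simp only [Real.exp_zero] at this
  linarith [this]

private lemma bm_key_exp_bound {b x : ℝ} (hb0 : 0 ≤ b) (hb3 : b < 3) (hx : |x| ≤ b) :
    Real.exp x ≤ 1 + x + x^2 / (2*(1 - b/3)) := by
  have hb' : 0 < 1 - b/3 := by linarith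
  rcases le_or_gt 0 x with h0 | h0
  · have hx3 : 0 < 1 - x/3 := by
      have := (abs_le.mp hx).2; linarith
    have h1 := bm_phi_nonneg x h0
    have h2 : Real.exp x - 1 - x ≤ x^2 / (2*(1 - x/3)) := by
      rw [le_div_iff₀ (by linarith)]
      nlinarith
    have h3 : x^2 / (2*(1 - x/3)) ≤ x^2 / (2*(1 - b/3)) := by
      apply div_le_div_of_nonneg_left (by positivity) (by linarith)
      have := (abs_le.mp hx).2; linarith
    linarith
  · have h1 := bm_exp_le_neg x h0.le
    have h2 : x^2/2 ≤ x^2 / (2*(1 - b/3)) := by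
      apply div_le_div_of_nonneg_left (by positivity) (by positivity)
      linarith
  -- done
    linarith

end RealLemmas


/-- Bernstein's inequality for martingales (first form): for a martingale
difference sequence `X_1, …, X_n` w.r.t. the filtration `ℱ` with `|X_i| ≤ K` a.s.,
writing `S_i = X_1 + ⋯ + X_i` and `Σ_n² = ∑_{t=1}^n E[X_t² | ℱ_{t−1}]`,
`P(max_{1≤i≤n} S_i > s ∧ Σ_n² ≤ ν) ≤ exp(−s²/(2(ν + Ks/3)))`. -/
theorem bernstein_martingale {Ω : Type*} [m0 : MeasurableSpace Ω]
    (μ : Measure Ω) [IsProbabilityMeasure μ]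
    (n : ℕ) (hn : 1 ≤ n) (ℱ : Filtration ℕ m0)
    (X : ℕ → Ω → ℝ) (K : ℝ) (hK : 0 < K)
    (hadp : ∀ i ∈ Icc 1 n, StronglyMeasurable[ℱ i] (X i))
    (hmd : ∀ i ∈ Icc 1 n, μ[X i | ℱ (i - 1)] =ᵐ[μ] 0)
    (hbdd : ∀ i ∈ Icc 1 n, ∀ᵐ ω ∂μ, |X i ω| ≤ K)
    (s ν : ℝ) (hs : 0 < s) (hν : 0 < ν) :
    μ {ω | ((Icc 1 n).sup' (Finset.nonempty_Icc.mpr hn)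
          fun i => ∑ j ∈ Icc 1 i, X j ω) > s ∧
        (∑ t ∈ Icc 1 n, (μ[(fun ω' => (X t ω') ^ 2) | ℱ (t - 1)]) ω) ≤ ν} ≤
      ENNReal.ofReal (Real.exp (-s ^ 2 / (2 * (ν + K * s / 3)))) := by
  classical
  have hd : (0:ℝ) < ν + K * s / 3 := by positivity
  set l : ℝ := s / (ν + K * s / 3) with hl_def
  have hl : 0 < l := div_pos hs hd
  have hlK : 0 < l * K := mul_pos hl hK
  have hlK3 : l * K < 3 := by
    rw [hl_def, div_mul_eq_mul_div, div_lt_iff₀ hd]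
    nlinarith
  have h1lK : 0 < 1 - l * K / 3 := by linarith
  set c : ℝ := l ^ 2 / (2 * (1 - l * K / 3)) with hc_def
  have hc : 0 < c := by positivity
  -- extended difference sequence
  set Y : ℕ → Ω → ℝ := fun i ω => if i ∈ Icc 1 n then X i ω else 0 with hY_def
  have hYsm : ∀ i, StronglyMeasurable[ℱ i] (Y i) := by
    intro i
    by_cases hi : i ∈ Icc 1 n
    · have hfe : Y i = X i := funext fun ω => if_pos hi
      rw [hfe]; exact hadp i hi
    · have hfe : Y i = fun _ => (0:ℝ) := funext fun ω => if_neg hi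
      rw [hfe]; exact stronglyMeasurable_const
  have hYbdd : ∀ i, ∀ᵐ ω ∂μ, |Y i ω| ≤ K := by
    intro i
    by_cases hi : i ∈ Icc 1 n
    · have hfe : Y i = X i := funext fun ω => if_pos hi
      rw [hfe]; exact hbdd i hi
    · have hfe : Y i = fun _ => (0:ℝ) := funext fun ω => if_neg hi
      rw [hfe]; exact ae_of_all _ fun ω => by simp [hK.le]
  have hYae : ∀ᵐ ω ∂μ, ∀ j, |Y j ω| ≤ K := ae_all_iff.mpr hYbdd
  have hYint : ∀ i, Integrable (Y i) μ := by
    intro i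
    refine Integrable.mono' (integrable_const K)
      ((hYsm i).mono (ℱ.le i)).aestronglyMeasurable ?_
    filter_upwards [hYbdd i] with ω h using by rwa [Real.norm_eq_abs]
  set g : ℕ → Ω → ℝ := fun t => μ[(fun ω => (Y t ω) ^ 2) | ℱ (t - 1)] with hg_def
  have hg0 : ∀ t, (0:Ω → ℝ) ≤ᵐ[μ] g t := fun t =>
    condExp_nonneg (ae_of_all _ fun ω => sq_nonneg _)
  have hgae : ∀ᵐ ω ∂μ, ∀ t, 0 ≤ g t ω := ae_all_iff.mpr fun t => hg0 t
  have hgsm : ∀ t, StronglyMeasurable[ℱ (t-1)] (g t) := fun t => stronglyMeasurable_condExp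
  set S : ℕ → Ω → ℝ := fun i ω => ∑ j ∈ Icc 1 i, Y j ω with hS_def
  set V : ℕ → Ω → ℝ := fun i ω => ∑ t ∈ Icc 1 i, g t ω with hV_def
  set M : ℕ → Ω → ℝ := fun i ω => Real.exp (l * S i ω - c * V i ω) with hM_def
  have hMpos : ∀ i ω, 0 < M i ω := fun i ω => Real.exp_pos _
  have hMadp : StronglyAdapted ℱ M := by
    intro i
    have hSsm : StronglyMeasurable[ℱ i] (S i) := by
      apply Finset.stronglyMeasurable_fun_sum
      intro j hj
      exact (hYsm j).mono (ℱ.mono (mem_Icc.mp hj).2)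
    have hVsm : StronglyMeasurable[ℱ i] (V i) := by
      apply Finset.stronglyMeasurable_fun_sum
      intro t ht
      exact (hgsm t).mono (ℱ.mono ((Nat.sub_le t 1).trans (mem_Icc.mp ht).2))
    exact Real.continuous_exp.comp_stronglyMeasurable
      ((hSsm.const_mul l).sub (hVsm.const_mul c))
  have hMbd : ∀ i, ∀ᵐ ω ∂μ, ‖M i ω‖ ≤ Real.exp (l * (i * K)) := by
    intro i
    filter_upwards [hYae, hgae] with ω hY hg
    rw [Real.norm_eq_abs, abs_of_pos (hMpos i ω)]
    apply Real.exp_le_exp.mpr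
    have hSb : S i ω ≤ i * K := by
      calc S i ω ≤ ∑ j ∈ Icc 1 i, K := Finset.sum_le_sum fun j _ => (abs_le.mp (hY j)).2
        _ = i * K := by simp [Nat.card_Icc]
    have hVb : 0 ≤ V i ω := Finset.sum_nonneg fun t _ => hg t
    have h1 : l * S i ω ≤ l * (i * K) := mul_le_mul_of_nonneg_left hSb hl.le
    nlinarith
  have hMint : ∀ i, Integrable (M i) μ := by
    intro i
    exact Integrable.mono' (integrable_const (Real.exp (l * (i * K))))
      ((hMadp i).mono (ℱ.le i)).aestronglyMeasurable (hMbd i)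
  -- the supermartingale property
  have hstep : ∀ i, μ[M (i+1) | ℱ i] ≤ᵐ[μ] M i := by
    intro i
    set A : Ω → ℝ := fun ω => M i ω * Real.exp (-(c * g (i+1) ω)) with hA_def
    set B : Ω → ℝ := fun ω => Real.exp (l * Y (i+1) ω) with hB_def
    have hgsucc : StronglyMeasurable[ℱ i] (g (i+1)) := by simpa using hgsm (i+1)
    have hA_sm : StronglyMeasurable[ℱ i] A :=
      (hMadp i).mul
        (Real.continuous_exp.comp_stronglyMeasurable (hgsucc.const_mul c).neg)
    have hMsucc : M (i+1) = fun ω => A ω * B ω := by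
      funext ω
      rw [hM_def, hA_def, hB_def, hM_def]
      simp only
      rw [hS_def, hV_def]
      simp only
      rw [Finset.sum_Icc_succ_top (Nat.le_add_left 1 i),
        Finset.sum_Icc_succ_top (Nat.le_add_left 1 i),
        ← Real.exp_add, ← Real.exp_add]
      congr 1
      ring
    have hBint : Integrable B μ := by
      refine Integrable.mono' (integrable_const (Real.exp (l * K)))
        ((Real.continuous_exp.comp_stronglyMeasurable
          ((hYsm (i+1)).const_mul l)).mono (ℱ.le (i+1))).aestronglyMeasurable ?_
      filter_upwards [hYbdd (i+1)] with ω hY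
      rw [hB_def]
      simp only [Real.norm_eq_abs, abs_of_pos (Real.exp_pos _)]
      exact Real.exp_le_exp.mpr (mul_le_mul_of_nonneg_left ((abs_le.mp hY).2) hl.le)
    have hABint : Integrable (fun ω => A ω * B ω) μ := hMsucc ▸ hMint (i+1)
    have step1 : μ[fun ω => A ω * B ω | ℱ i] =ᵐ[μ] fun ω => A ω * (μ[B | ℱ i]) ω := by
      have := condExp_mul_of_stronglyMeasurable_left hA_sm hABint hBint
      filter_upwards [this] with ω hω using hω
    -- Y² integrable
    have hY2sm : StronglyMeasurable[ℱ (i+1)] (fun ω => (Y (i+1) ω)^2) := by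
      have := (hYsm (i+1)).mul (hYsm (i+1))
      simpa [sq, Pi.mul_def] using this
    have hY2int : Integrable (fun ω => (Y (i+1) ω)^2) μ := by
      refine Integrable.mono' (integrable_const (K^2))
        (hY2sm.mono (ℱ.le (i+1))).aestronglyMeasurable ?_
      · filter_upwards [hYbdd (i+1)] with ω hY
        rw [Real.norm_eq_abs, abs_of_nonneg (sq_nonneg _)]
        exact sq_le_sq' (by linarith [(abs_le.mp hY).1]) ((abs_le.mp hY).2)
    have hkey : B ≤ᵐ[μ] fun ω => 1 + l * Y (i+1) ω + c * (Y (i+1) ω)^2 := by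
      filter_upwards [hYbdd (i+1)] with ω hY
      have habs : |l * Y (i+1) ω| ≤ l * K := by
        rw [abs_mul, abs_of_pos hl]
        exact mul_le_mul_of_nonneg_left hY hl.le
      have := bm_key_exp_bound hlK.le hlK3 habs
      rw [hB_def]
      simp only
      calc Real.exp (l * Y (i+1) ω)
          ≤ 1 + l * Y (i+1) ω + (l * Y (i+1) ω)^2 / (2 * (1 - l * K / 3)) := this
        _ = 1 + l * Y (i+1) ω + c * (Y (i+1) ω)^2 := by
            rw [hc_def]; ring
    have hRHSint : Integrable (fun ω => 1 + l * Y (i+1) ω + c * (Y (i+1) ω)^2) μ :=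
      ((integrable_const (1:ℝ)).add ((hYint (i+1)).const_mul l)).add (hY2int.const_mul c)
    have hYmd : μ[Y (i+1) | ℱ i] =ᵐ[μ] 0 := by
      by_cases hi : i+1 ∈ Icc 1 n
      · have hYX : Y (i+1) = X (i+1) := funext fun ω => if_pos hi
        have := hmd (i+1) hi
        simp only [Nat.add_sub_cancel] at this
        rwa [hYX]
      · have hY0 : Y (i+1) = (0 : Ω → ℝ) := funext fun ω => if_neg hi
        rw [hY0]
        simp [condExp_zero]
    have step2 : μ[B | ℱ i] ≤ᵐ[μ] fun ω => 1 + c * g (i+1) ω := by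
      have hmono := condExp_mono (m := ℱ i) hBint hRHSint hkey
      have hsplit : μ[fun ω => 1 + l * Y (i+1) ω + c * (Y (i+1) ω)^2 | ℱ i]
          =ᵐ[μ] fun ω => 1 + c * g (i+1) ω := by
        have e1 : μ[fun ω => 1 + l * Y (i + 1) ω + c * (Y (i + 1) ω) ^ 2|ℱ i] =ᵐ[μ]
            μ[fun ω => 1 + l * Y (i + 1) ω|ℱ i] + μ[fun ω => c * (Y (i + 1) ω) ^ 2|ℱ i] :=
          condExp_add ((integrable_const (1:ℝ)).add ((hYint (i+1)).const_mul l))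
            (hY2int.const_mul c) (ℱ i)
        have e2 : μ[fun ω => 1 + l * Y (i + 1) ω|ℱ i] =ᵐ[μ]
            μ[fun _ : Ω => (1:ℝ)|ℱ i] + μ[fun ω => l * Y (i + 1) ω|ℱ i] :=
          condExp_add (integrable_const 1) ((hYint (i+1)).const_mul l) (ℱ i)
        have e3 : μ[fun ω => l * Y (i + 1) ω|ℱ i] =ᵐ[μ]
            fun ω => l * (μ[Y (i + 1)|ℱ i]) ω :=
          condExp_smul (μ := μ) (m := ℱ i) l (Y (i+1))
        have e4 : μ[fun ω => c * (Y (i + 1) ω) ^ 2|ℱ i] =ᵐ[μ]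
            fun ω => c * (μ[fun ω' => (Y (i + 1) ω') ^ 2|ℱ i]) ω :=
          condExp_smul (μ := μ) (m := ℱ i) c (fun ω => (Y (i + 1) ω) ^ 2)
        have e5 : g (i+1) = μ[fun ω' => (Y (i + 1) ω') ^ 2|ℱ i] := rfl
        have e6 : μ[fun _ : Ω => (1:ℝ)|ℱ i] = fun _ => 1 := condExp_const (ℱ.le i) 1
        filter_upwards [e1, e2, e3, e4, hYmd] with ω h1 h2 h3 h4 h5
        simp only [Pi.add_apply] at h1 h2
        rw [h1, h2, h3, h4, e6, ← e5]
        simp only [Pi.zero_apply] at h5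
        rw [h5]
        ring
      exact hmono.trans hsplit.le
    have hachain : (fun ω => A ω * (μ[B | ℱ i]) ω) ≤ᵐ[μ] M i := by
      filter_upwards [step2, hg0 (i+1)] with ω h2 hgw
      have hA0 : 0 ≤ A ω := le_of_lt (mul_pos (hMpos i ω) (Real.exp_pos _))
      have h7 : A ω * (μ[B|ℱ i]) ω ≤ A ω * (1 + c * g (i+1) ω) :=
        mul_le_mul_of_nonneg_left h2 hA0
      have h8 : 1 + c * g (i+1) ω ≤ Real.exp (c * g (i+1) ω) := by
        have := Real.add_one_le_exp (c * g (i+1) ω); linarith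
      have h9 : A ω * (1 + c * g (i+1) ω) ≤ A ω * Real.exp (c * g (i+1) ω) :=
        mul_le_mul_of_nonneg_left h8 hA0
      have h10 : A ω * Real.exp (c * g (i+1) ω) = M i ω := by
        rw [hA_def]
        simp only
        rw [mul_assoc, ← Real.exp_add]
        simp
      calc A ω * (μ[B|ℱ i]) ω ≤ A ω * (1 + c * g (i+1) ω) := h7
        _ ≤ A ω * Real.exp (c * g (i+1) ω) := h9
        _ = M i ω := h10
    have heq : μ[M (i+1)|ℱ i] =ᵐ[μ] fun ω => A ω * (μ[B|ℱ i]) ω := by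
      rw [hMsucc]; exact step1
    exact heq.le.trans hachain
  have hsuper : Supermartingale M ℱ μ := supermartingale_nat hMadp hMint hstep
  set a : ℝ := Real.exp (l * s - c * ν) with ha_def
  have ha : 0 < a := Real.exp_pos _
  set τ : Ω → ℕ∞ := fun ω => ((hittingBtwn M (Set.Ici a) 0 n ω : ℕ) : ℕ∞) with hτ_def
  have hτ : IsStoppingTime ℱ τ := hMadp.adapted.isStoppingTime_hittingBtwn measurableSet_Ici
  have hτle : ∀ ω, τ ω ≤ n := fun ω => WithTop.coe_le_coe.mpr (hittingBtwn_le ω)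
  have hsv_int : Integrable (stoppedValue M τ) μ :=
    integrable_stoppedValue ℕ hτ hMint hτle
  have hM0 : M 0 = fun _ => (1:ℝ) := by
    funext ω; rw [hM_def]; simp [hS_def, hV_def]
  have hE1 : ∫ ω, stoppedValue M τ ω ∂μ ≤ (1:ℝ) := by
    have hmono := (hsuper.neg).expected_stoppedValue_mono
      (isStoppingTime_const ℱ 0) hτ (fun ω => by exact_mod_cast (zero_le : (0:ℕ∞) ≤ τ ω)) hτle
    have hl1 : stoppedValue (-M) (fun _ => ((0:ℕ) : WithTop ℕ)) = -(M 0) := rfl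
    have hl2 : stoppedValue (-M) τ = -(stoppedValue M τ) := rfl
    simp only [stoppedValue_const] at hmono
    rw [hl2] at hmono
    simp only [Pi.neg_apply] at hmono
    rw [integral_neg, integral_neg, neg_le_neg_iff] at hmono
    rw [hM0] at hmono
    simpa using hmono
  set Aset : Set Ω := {ω | a ≤ (range (n+1)).sup' nonempty_range_add_one fun k => M k ω}
    with hAset_def
  have hAmeas : MeasurableSet Aset := by
    apply measurableSet_le measurable_const
    exact Finset.measurable_range_sup'' fun k _ => ((hMadp k).measurable.le (ℱ.le k))
  have hsv_ge : ∀ ω ∈ Aset, a ≤ stoppedValue M τ ω := by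
    intro ω hω
    rw [hAset_def, Set.mem_setOf_eq, Finset.le_sup'_iff] at hω
    obtain ⟨k, hk, hak⟩ := hω
    exact stoppedValue_hittingBtwn_mem
      ⟨k, ⟨Nat.zero_le _, Nat.lt_succ_iff.mp (mem_range.mp hk)⟩, hak⟩
  have hkey2 : a * (μ Aset).toReal ≤ ∫ ω in Aset, stoppedValue M τ ω ∂μ :=
    by have := setIntegral_ge_of_const_le hAmeas (measure_ne_top μ _) hsv_ge hsv_int.integrableOn
       rwa [smul_eq_mul, mul_comm] at this
  have hkey3 : ∫ ω in Aset, stoppedValue M τ ω ∂μ ≤ ∫ ω, stoppedValue M τ ω ∂μ :=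
    setIntegral_le_integral hsv_int (ae_of_all _ fun ω => (hMpos _ ω).le)
  have hmuA : μ Aset ≤ ENNReal.ofReal (Real.exp (c * ν - l * s)) := by
    have h1a : a * (μ Aset).toReal ≤ 1 := le_trans hkey2 (le_trans hkey3 hE1)
    have htoReal : (μ Aset).toReal ≤ Real.exp (c * ν - l * s) := by
      have h2a : (μ Aset).toReal ≤ 1 / a := by rw [le_div_iff₀ ha]; linarith
      calc (μ Aset).toReal ≤ 1/a := h2a
        _ = Real.exp (c * ν - l * s) := by
          rw [ha_def, one_div, ← Real.exp_neg]; congr 1; ring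
    calc μ Aset = ENNReal.ofReal (μ Aset).toReal :=
        (ENNReal.ofReal_toReal (measure_ne_top μ _)).symm
      _ ≤ ENNReal.ofReal _ := ENNReal.ofReal_le_ofReal htoReal
  have harith : c * ν - l * s = -s ^ 2 / (2 * (ν + K * s / 3)) := by
    have h2 : (1 : ℝ) - l * K / 3 = ν / (ν + K * s / 3) := by
      rw [hl_def]; field_simp; ring
    rw [hc_def, h2, hl_def]
    field_simp
    ring
  have hsub : μ {ω | ((Icc 1 n).sup' (Finset.nonempty_Icc.mpr hn)
          fun i => ∑ j ∈ Icc 1 i, X j ω) > s ∧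
        (∑ t ∈ Icc 1 n, (μ[(fun ω' => (X t ω') ^ 2) | ℱ (t - 1)]) ω) ≤ ν} ≤ μ Aset := by
    apply measure_mono_ae
    filter_upwards [hgae] with ω hg
    intro hmem
    obtain ⟨hsup, hSig⟩ := hmem
    obtain ⟨i, hi, hSi⟩ := (Finset.lt_sup'_iff _).mp hsup
    obtain ⟨hi1, hin⟩ := mem_Icc.mp hi
    have hSY : S i ω = ∑ j ∈ Icc 1 i, X j ω := by
      rw [hS_def]
      apply Finset.sum_congr rfl
      intro j hj
      exact if_pos (mem_Icc.mpr ⟨(mem_Icc.mp hj).1, le_trans (mem_Icc.mp hj).2 hin⟩)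
    have hVn : V n ω = ∑ t ∈ Icc 1 n, (μ[(fun ω' => (X t ω') ^ 2) | ℱ (t - 1)]) ω := by
      rw [hV_def]
      apply Finset.sum_congr rfl
      intro t ht
      have hfe : (fun ω' => (Y t ω') ^ 2) = (fun ω' => (X t ω') ^ 2) := by
        funext ω'; exact congrArg (fun z : ℝ => z^2) (if_pos ht)
      rw [hg_def]
      simp only
      rw [hfe]
    have hVle : V i ω ≤ V n ω := by
      rw [hV_def]
      apply Finset.sum_le_sum_of_subset_of_nonneg (Finset.Icc_subset_Icc_right hin)
      intro t _ _; exact hg t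
    have haM : a ≤ M i ω := by
      rw [ha_def, hM_def]
      apply Real.exp_le_exp.mpr
      have h1' : l * s ≤ l * S i ω :=
        mul_le_mul_of_nonneg_left (by rw [hSY]; exact hSi.le) hl.le
      have h2' : c * V i ω ≤ c * ν := by
        apply mul_le_mul_of_nonneg_left _ hc.le
        rw [hVn] at *
        linarith [hVle, hSig]
      linarith
    show a ≤ (range (n+1)).sup' nonempty_range_add_one fun k => M k ω
    exact le_trans haM (Finset.le_sup' (fun k => M k ω) (mem_range.mpr (Nat.lt_succ_of_le hin)))
  refine le_trans hsub (le_trans hmuA (le_of_eq (by rw [harith])))
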